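/- In the enveloping algebra U(g_a), realized as (S(g_a),◂), for all indices i₁,…,i_n ∈ [N]: ε_{i₁} ◂ ⋯ ◂ ε_{i_n} = Σ_{I ⊆ [n]} λ(I)·(∏_{p∈I} a_{i_p})·(∏_{q∉I} ε_{i_q}), where λ({i₁<…<i_k}) = (i₁−1)(i₂−2)⋯(i_k−k). This expresses the PBW basis in terms of the monomial basis of S(g_a). -/

import Mathlib

noncomputable section

/-- `λ(I) = (i₁−1)(i₂−2)⋯(i_k−k)` for `I = {i₁<…<i_k} ⊆ [n]` (elements of `Fin n`
being identified with `{1,…,n}` via `p ↦ p+1`). -/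
def lamCoeffFin {n : ℕ} (I : Finset (Fin n)) : ℤ :=
  ((I.sort (· ≤ ·)).zipIdx.map (fun p => ((p.1 : ℕ) : ℤ) - p.2)).prod

open Finset MvPolynomial

-- enumFrom of concat
lemma myEnumFrom_concat {α : Type*} (l : List α) (x : α) (k : ℕ) :
    (l ++ [x]).zipIdx k = l.zipIdx k ++ [(x, k + l.length)] := by
  simp [List.zipIdx_append]

lemma myEnum_concat {α : Type*} (l : List α) (x : α) :
    (l ++ [x]).zipIdx = l.zipIdx ++ [(x, l.length)] := by
  have := myEnumFrom_concat l x 0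
  simpa using this

-- sort of map castSucc
lemma sort_map_castSucc {n : ℕ} (J : Finset (Fin n)) :
    ((J.map Fin.castSuccEmb).sort (· ≤ ·)) = (J.sort (· ≤ ·)).map Fin.castSucc := by
  apply fun h1 h2 h3 => List.Perm.eq_of_pairwise' (r := (fun x y : Fin (n+1) => x ≤ y)) h2 h3 h1
  · rw [← Multiset.coe_eq_coe]
    rw [Finset.sort_eq, Finset.map_val]
    rw [← Multiset.map_coe, Finset.sort_eq]
    rfl
  · exact Finset.pairwise_sort _ _
  · rw [List.pairwise_map]
    exact (Finset.pairwise_sort J (· ≤ ·)).imp (fun h => by simpa using h)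

lemma last_not_mem_map {n : ℕ} (J : Finset (Fin n)) :
    Fin.last n ∉ J.map Fin.castSuccEmb := by
  simp only [Finset.mem_map, Fin.castSuccEmb]
  rintro ⟨y, -, hy⟩
  exact (Fin.castSucc_lt_last y).ne hy

lemma sort_insert_last {n : ℕ} (J : Finset (Fin n)) :
    ((insert (Fin.last n) (J.map Fin.castSuccEmb)).sort (· ≤ ·))
      = ((J.map Fin.castSuccEmb).sort (· ≤ ·)) ++ [Fin.last n] := by
  apply fun h1 h2 h3 => List.Perm.eq_of_pairwise' (r := (fun x y : Fin (n+1) => x ≤ y)) h2 h3 h1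
  · refine List.Perm.trans ?_ (List.perm_append_singleton _ _).symm
    rw [← Multiset.coe_eq_coe, Finset.sort_eq]
    rw [Finset.insert_val_of_notMem (last_not_mem_map J)]
    rw [show ((Fin.last n :: (J.map Fin.castSuccEmb).sort (· ≤ ·) : List (Fin (n+1))) : Multiset (Fin (n+1))) = Fin.last n ::ₘ ((J.map Fin.castSuccEmb).sort (· ≤ ·) : Multiset (Fin (n+1))) from rfl]
    rw [Finset.sort_eq]
  · exact Finset.pairwise_sort _ _
  · rw [List.pairwise_append]
    refine ⟨Finset.pairwise_sort _ _, List.pairwise_singleton _ _, ?_⟩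
    intro x hx y hy
    simp only [List.mem_singleton] at hy
    subst hy
    exact Fin.le_last x

lemma myEnumFrom_map {α β : Type*} (f : α → β) (l : List α) (k : ℕ) :
    (l.map f).zipIdx k = (l.zipIdx k).map (Prod.map f id) := by
  exact List.zipIdx_map

lemma lam_map {n : ℕ} (J : Finset (Fin n)) :
    lamCoeffFin (J.map Fin.castSuccEmb) = lamCoeffFin J := by
  unfold lamCoeffFin
  rw [sort_map_castSucc, myEnumFrom_map, List.map_map]
  rfl

lemma lam_insert {n : ℕ} (J : Finset (Fin n)) :
    lamCoeffFin (insert (Fin.last n) (J.map Fin.castSuccEmb))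
      = ((n : ℤ) - J.card) * lamCoeffFin J := by
  rw [← lam_map J]
  unfold lamCoeffFin
  rw [sort_insert_last, myEnum_concat, List.map_append, List.prod_append]
  simp [Finset.length_sort, mul_comm]

lemma lam_empty (n : ℕ) : lamCoeffFin (∅ : Finset (Fin n)) = 1 := by
  simp [lamCoeffFin]

section Bstuff
variable (K : Type*) [Field K] (N : ℕ) (a : Fin N → K)
    (B : MvPolynomial (Fin N) K →ₗ[K] MvPolynomial (Fin N) K →ₗ[K] MvPolynomial (Fin N) K)
    (hB : ∀ (k l : ℕ) (i : Fin k → Fin N) (j : Fin l → Fin N),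
      B (∏ p, MvPolynomial.X (i p)) (∏ q, MvPolynomial.X (j q))
        = ∑ I ∈ (Finset.univ : Finset (Fin l)).powerset,
            (((k.descFactorial I.card : K) * ∏ q ∈ I, a (j q)) •
              ((∏ q ∈ Finset.univ \ I, MvPolynomial.X (j q)) * ∏ p, MvPolynomial.X (i p))))

include hB in
lemma hB_fin (k : ℕ) (i : Fin k → Fin N) (j : Fin N) :
    B (∏ p, MvPolynomial.X (i p)) (MvPolynomial.X j)
      = MvPolynomial.X j * ∏ p, MvPolynomial.X (i p)
        + ((k : K) * a j) • ∏ p, MvPolynomial.X (i p) := by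
  have h := hB k 1 i (fun _ => j)
  have huniv : (Finset.univ : Finset (Fin 1)) = {0} := rfl
  rw [huniv, show ({0} : Finset (Fin 1)) = insert 0 ∅ from rfl,
    Finset.sum_powerset_insert (by simp)] at h
  simp only [Finset.powerset_empty, Finset.sum_singleton, Finset.card_empty, Finset.card_singleton, Nat.descFactorial_zero,
    Nat.descFactorial_one, Finset.prod_empty, Finset.prod_singleton,
    Finset.sdiff_self, Finset.sdiff_empty, Fin.prod_univ_one, Nat.cast_one, mul_one,
    one_mul, one_smul, Finset.prod_empty] at h
  simp only [show (insert (0:Fin 1) ∅ : Finset (Fin 1)) = {0} from rfl,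
    Finset.prod_singleton, Finset.card_singleton, Nat.descFactorial_one] at h
  rw [h]

include hB in
lemma hB_set {m : ℕ} (s : Finset (Fin m)) (f : Fin m → Fin N) (j : Fin N) :
    B (∏ q ∈ s, MvPolynomial.X (f q)) (MvPolynomial.X j)
      = MvPolynomial.X j * ∏ q ∈ s, MvPolynomial.X (f q)
        + ((s.card : K) * a j) • ∏ q ∈ s, MvPolynomial.X (f q) := by
  have key : (∏ q ∈ s, MvPolynomial.X (f q) : MvPolynomial (Fin N) K)
      = ∏ p : Fin s.card, MvPolynomial.X (f ((s.orderIsoOfFin rfl) p)) := by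
    rw [← Finset.prod_coe_sort s fun q => (MvPolynomial.X (f q) : MvPolynomial (Fin N) K)]
    exact (Equiv.prod_comp (s.orderIsoOfFin rfl).toEquiv
      (fun x : {x // x ∈ s} => (MvPolynomial.X (f x) : MvPolynomial (Fin N) K))).symm
  rw [key, hB_fin K N a B hB]

end Bstuff

lemma map_castSucc_filter {n : ℕ} (t : Finset (Fin (n+1)))
    (ht : t ⊆ (Finset.univ : Finset (Fin n)).map Fin.castSuccEmb) :
    (Finset.univ.filter fun q : Fin n => q.castSucc ∈ t).map Fin.castSuccEmb = t := by
  ext x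
  simp only [Finset.mem_map, Finset.mem_filter, Finset.mem_univ, true_and, Fin.castSuccEmb]
  constructor
  · rintro ⟨y, hy, hxy⟩
    subst hxy
    exact hy
  · intro hx
    obtain ⟨y, -, rfl⟩ := Finset.mem_map.1 (ht hx)
    exact ⟨y, hx, rfl⟩

lemma sum_powerset_castSucc {M : Type*} [AddCommMonoid M] {n : ℕ}
    (g : Finset (Fin (n+1)) → M) :
    ∑ t ∈ ((Finset.univ : Finset (Fin n)).map Fin.castSuccEmb).powerset, g t
      = ∑ J ∈ (Finset.univ : Finset (Fin n)).powerset, g (J.map Fin.castSuccEmb) := by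
  classical
  refine Finset.sum_nbij' (fun t => Finset.univ.filter fun q : Fin n => q.castSucc ∈ t)
    (fun J => J.map Fin.castSuccEmb) ?_ ?_ ?_ ?_ ?_
  · intro t _
    exact Finset.mem_powerset.2 (Finset.filter_subset _ _)
  · intro J _
    exact Finset.mem_powerset.2 (Finset.map_subset_map.2 (Finset.subset_univ J))
  · intro t ht
    exact map_castSucc_filter t (Finset.mem_powerset.1 ht)
  · intro J _
    ext q
    simp only [Finset.mem_filter, Finset.mem_univ, true_and, Finset.mem_map, Fin.castSuccEmb]
    exact ⟨fun ⟨b, hb, h⟩ => by rwa [show b = q from Fin.castSucc_injective n h] at hb,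
      fun h => ⟨q, h, rfl⟩⟩
  · intro t ht
    rw [map_castSucc_filter t (Finset.mem_powerset.1 ht)]

lemma map_sdiff_castSucc {n : ℕ} (s t : Finset (Fin n)) :
    (s \ t).map Fin.castSuccEmb = s.map Fin.castSuccEmb \ t.map Fin.castSuccEmb := by
  classical
  simp only [Finset.map_eq_image]
  exact Finset.image_sdiff _ _ Fin.castSuccEmb.injective

lemma sdiff_map_castSucc {n : ℕ} (I : Finset (Fin n)) :
    (Finset.univ : Finset (Fin (n+1))) \ I.map Fin.castSuccEmb
      = insert (Fin.last n) ((Finset.univ \ I).map Fin.castSuccEmb) := by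
  rw [Fin.univ_castSuccEmb, Finset.cons_eq_insert,
    Finset.insert_sdiff_of_notMem _ (last_not_mem_map I), map_sdiff_castSucc]

lemma sdiff_insert_last {n : ℕ} (I : Finset (Fin n)) :
    (Finset.univ : Finset (Fin (n+1))) \ insert (Fin.last n) (I.map Fin.castSuccEmb)
      = (Finset.univ \ I).map Fin.castSuccEmb := by
  rw [Finset.sdiff_insert, sdiff_map_castSucc, Finset.erase_insert (last_not_mem_map _)]


/-- in `U(g_a) = (S(g_a), ◂)` (with `S(g_a)` realized as the
polynomial algebra on `ε₁,…,ε_N` and `◂` given by its formula on monomials),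
the PBW basis is expressed in the monomial basis by
`ε_{i₁} ◂ ⋯ ◂ ε_{i_n} = Σ_{I⊆[n]} λ(I) (∏_{p∈I} a_{i_p}) ∏_{q∉I} ε_{i_q}`. -/
theorem pbw_in_monomial_basis (K : Type*) [Field K] (N : ℕ) (a : Fin N → K)
    (B : MvPolynomial (Fin N) K →ₗ[K] MvPolynomial (Fin N) K →ₗ[K] MvPolynomial (Fin N) K)
    (hB : ∀ (k l : ℕ) (i : Fin k → Fin N) (j : Fin l → Fin N),
      B (∏ p, MvPolynomial.X (i p)) (∏ q, MvPolynomial.X (j q))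
        = ∑ I ∈ (Finset.univ : Finset (Fin l)).powerset,
            (((k.descFactorial I.card : K) * ∏ q ∈ I, a (j q)) •
              ((∏ q ∈ Finset.univ \ I, MvPolynomial.X (j q)) * ∏ p, MvPolynomial.X (i p)))) :
    ∀ (n : ℕ) (i : Fin n → Fin N),
      (List.ofFn fun p : Fin n => (MvPolynomial.X (i p) : MvPolynomial (Fin N) K)).foldl
          (fun u v => B u v) 1
        = ∑ I ∈ (Finset.univ : Finset (Fin n)).powerset,
            ((((lamCoeffFin I : ℤ) : K) * ∏ p ∈ I, a (i p)) •
              ∏ q ∈ Finset.univ \ I, MvPolynomial.X (i q)) := by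
  intro n
  induction n with
  | zero =>
      intro i
      simp [lamCoeffFin]
  | succ n ih =>
      intro i
      rw [List.ofFn_succ', List.concat_eq_append, List.foldl_append]
      simp only [List.foldl_cons, List.foldl_nil]
      rw [ih (fun p => i p.castSucc)]
      simp only [map_sum, map_smul, LinearMap.sum_apply, LinearMap.smul_apply]
      simp only [hB_set K N a B hB]
      simp only [smul_add]
      rw [Finset.sum_add_distrib]
      have huniv : insert (Fin.last n) (Finset.univ.map Fin.castSuccEmb)
          = (Finset.univ : Finset (Fin (n+1))) := by
        rw [Fin.univ_castSuccEmb, Finset.cons_eq_insert]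
      conv_rhs =>
        rw [← huniv]
        rw [Finset.sum_powerset_insert (last_not_mem_map _)]
        rw [sum_powerset_castSucc, sum_powerset_castSucc]
      congr 1
      · refine Finset.sum_congr rfl fun I _ => ?_
        rw [huniv, lam_map, Finset.prod_map, sdiff_map_castSucc,
          Finset.prod_insert (last_not_mem_map _), Finset.prod_map]
        simp only [Fin.coe_castSuccEmb]
      · refine Finset.sum_congr rfl fun I hI => ?_
        have hcard : (Finset.univ \ I).card = n - I.card := by
          rw [Finset.card_sdiff_of_subset (Finset.subset_univ I), Finset.card_univ, Fintype.card_fin]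
        have hle : I.card ≤ n := by
          simpa [Finset.card_univ] using Finset.card_le_card (Finset.subset_univ I)
        rw [huniv, lam_insert, Finset.prod_insert (last_not_mem_map _), Finset.prod_map,
          sdiff_insert_last, Finset.prod_map, hcard]
        simp only [Fin.coe_castSuccEmb]
        rw [smul_smul]
        congr 1
        push_cast [Nat.cast_sub hle]
        ring

end
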